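/- For every integer n ≥ 1: the determinant of the n×n matrix Δ_n with (a,b) entry B_{2a+2b−2}/(2a+2b−2)! (indices 1 ≤ a,b ≤ n) equals 1/(2^{2n²} · ∏_{m=1}^{2n−1} (2m+1)!!), and the determinant of the n×n matrix Θ_n with (a,b) entry B_{2a+2b}/(2a+2b)! equals (−1)^n/(2^{2n(n+1)} · ∏_{m=1}^{2n} (2m+1)!!). -/

import Mathlib

open Finset

namespace Stmt6
open PowerSeries
noncomputable section

def cc (k : ℕ) : ℚ := bernoulli (2*k) / ((2*k).factorial : ℚ)

def aa (n k : ℕ) : ℚ :=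
  if k ≤ n then ((2*n - k).factorial * n.factorial : ℚ) /
    ((2*n).factorial * k.factorial * (n-k).factorial) else 0

def ww (n i : ℕ) : ℚ := 2 * aa n (2*i+1)

def pq (a : ℚ) (d : ℕ) : ℚ := ∏ j ∈ range d, (a - j)

def Sig (n r : ℕ) : ℚ := ∑ i ∈ range ((n-1)/2 + 1), ww n i * cc (r - i + 1)

def NN (n : ℕ) : PowerSeries ℚ := PowerSeries.mk (aa n)
def DD (n : ℕ) : PowerSeries ℚ := PowerSeries.mk (fun k => (-1)^k * aa n k)

def hh (j : ℕ) : ℚ := ((2*j+1).factorial : ℚ)^2 / (((4*j+2).factorial : ℚ) * ((4*j+3).factorial : ℚ))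

def hh' (j : ℕ) : ℚ := -(((2*j+2).factorial : ℚ)^2 / (((4*j+4).factorial : ℚ) * ((4*j+5).factorial : ℚ)))

lemma pq_zero (a : ℚ) : pq a 0 = 1 := by simp [pq]

lemma pq_succ' (a : ℚ) (e : ℕ) : pq a (e+1) = a * pq (a-1) e := by
  rw [pq, Finset.prod_range_succ']
  simp only [Nat.cast_zero, sub_zero, pq]
  rw [mul_comm]
  congr 1
  exact Finset.prod_congr rfl fun j _ => by push_cast; ring

lemma pq_succ (a : ℚ) (e : ℕ) : pq a (e+1) = pq a e * (a - e) := by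
  rw [pq, Finset.prod_range_succ]; rfl

lemma pq_sub (a : ℚ) (e : ℕ) :
    pq a (e+1) - pq (a-1) (e+1) = (e+1) * pq (a-1) e := by
  rw [pq_succ' a e, pq_succ (a-1) e]; push_cast; ring

lemma alt_sum_pascal (f : ℕ → ℚ) (r : ℕ) :
    ∑ k ∈ range (r+2), (-1:ℚ)^k * ((r+1).choose k) * f k
      = ∑ k ∈ range (r+1), (-1:ℚ)^k * (r.choose k) * (f k - f (k+1)) := by
  have L : ∑ k ∈ range (r+2), (-1:ℚ)^k * ((r+1).choose k) * f k
      = (∑ k ∈ range (r+1), -((-1:ℚ)^k * ((r.choose k : ℚ) + (r.choose (k+1) : ℚ)) * f (k+1))) + f 0 := by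
    rw [Finset.sum_range_succ']
    simp only [Nat.choose_succ_succ, pow_succ]
    push_cast
    ring_nf
    simp [Nat.choose_zero_right]
    ring_nf
  have R : ∑ k ∈ range (r+1), (-1:ℚ)^k * (r.choose k) * f k
      = (∑ k ∈ range r, -((-1:ℚ)^k * (r.choose (k+1) : ℚ) * f (k+1))) + f 0 := by
    rw [Finset.sum_range_succ']
    simp only [pow_succ]
    push_cast
    ring_nf
    simp [Nat.choose_zero_right]
  have hsplit : ∑ k ∈ range (r+1), -((-1:ℚ)^k * ((r.choose k : ℚ) + (r.choose (k+1) : ℚ)) * f (k+1))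
      = (∑ k ∈ range (r+1), -((-1:ℚ)^k * (r.choose (k+1) : ℚ) * f (k+1)))
        + (∑ k ∈ range (r+1), -((-1:ℚ)^k * (r.choose k : ℚ) * f (k+1))) := by
    rw [← Finset.sum_add_distrib]; exact Finset.sum_congr rfl fun k _ => by ring
  have hdrop : ∑ k ∈ range (r+1), -((-1:ℚ)^k * (r.choose (k+1) : ℚ) * f (k+1))
      = ∑ k ∈ range r, -((-1:ℚ)^k * (r.choose (k+1) : ℚ) * f (k+1)) := by
    rw [Finset.sum_range_succ]; simp [Nat.choose_succ_self]
  simp only [mul_sub, Finset.sum_sub_distrib]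
  rw [R, L, hsplit, hdrop]
  have : ∑ k ∈ range (r+1), -((-1:ℚ)^k * (r.choose k : ℚ) * f (k+1))
      = -∑ k ∈ range (r+1), (-1:ℚ)^k * (r.choose k : ℚ) * f (k+1) := by
    rw [← Finset.sum_neg_distrib]
  rw [this]; ring

lemma Slemma (d : ℕ) : ∀ (r : ℕ) (a : ℚ),
    ∑ k ∈ range (r+1), (-1:ℚ)^k * (r.choose k) * pq (a - k) d
      = (∏ i ∈ range r, ((d:ℚ) - i)) * pq (a - r) (d - r) := by
  induction d using Nat.strong_induction_on with
  | _ d ih => ?_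
  intro r
  induction r with
  | zero => intro a; simp
  | succ r ihr =>
    intro a
    rw [alt_sum_pascal (fun k => pq (a - k) d) r]
    match d with
    | 0 =>
      have h1 : ∀ k : ℕ, pq (a - k) 0 - pq (a - (k+1:ℕ)) 0 = 0 := by
        intro k; rw [pq_zero, pq_zero]; ring
      have hz : ∑ k ∈ range (r+1), (-1:ℚ)^k * (r.choose k) * (pq (a-k) 0 - pq (a-(k+1:ℕ)) 0) = 0 :=
        Finset.sum_eq_zero fun k _ => by rw [h1 k, mul_zero]
      rw [hz, Finset.prod_eq_zero (Finset.mem_range.2 (Nat.succ_pos r))]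
      · simp
      · simp
    | e + 1 =>
      have h1 : ∀ k : ℕ, pq (a - k) (e+1) - pq (a - (k+1:ℕ)) (e+1)
          = (e+1) * pq ((a-1) - k) e := by
        intro k
        have : a - ((k:ℚ)+1) = (a - k) - 1 := by ring
        push_cast
        rw [this, pq_sub (a - k) e]
        congr 2
        ring
      calc ∑ k ∈ range (r+1), (-1:ℚ)^k * (r.choose k) * (pq (a-k) (e+1) - pq (a-(k+1:ℕ)) (e+1))
          = ((e:ℚ)+1) * ∑ k ∈ range (r+1), (-1:ℚ)^k * (r.choose k) * pq ((a-1) - k) e := by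
            rw [Finset.mul_sum]
            exact Finset.sum_congr rfl fun k _ => by rw [h1 k]; ring
        _ = ((e:ℚ)+1) * ((∏ i ∈ range r, ((e:ℚ) - i)) * pq ((a-1) - r) (e - r)) := by
            rw [ih e (Nat.lt_succ_self e) r (a-1)]
        _ = (∏ i ∈ range (r+1), (((e+1:ℕ):ℚ) - i)) * pq (a - ((r+1:ℕ):ℚ)) ((e+1) - (r+1)) := by
            rw [Finset.prod_range_succ']
            have h2 : ∀ i ∈ range r, ((e+1:ℕ):ℚ) - ((i+1:ℕ):ℚ) = (e:ℚ) - i := by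
              intro i _; push_cast; ring
            rw [Finset.prod_congr rfl h2]
            have h3 : a - ((r+1:ℕ):ℚ) = (a-1) - r := by push_cast; ring
            have h4 : (e+1) - (r+1) = e - r := by omega
            rw [h3, h4]
            push_cast; ring


lemma fact_ne (m : ℕ) : ((m.factorial : ℚ)) ≠ 0 := by
  exact_mod_cast (Nat.factorial_pos m).ne'

lemma pq_cast (m : ℕ) : ∀ d : ℕ, d ≤ m → pq (m:ℚ) d = (m.factorial : ℚ) / (m-d).factorial := by
  intro d
  induction d with
  | zero => intro _; rw [Nat.sub_zero, div_self (fact_ne m)]; simp [pq]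
  | succ e ih =>
    intro h
    have he : e ≤ m := by omega
    rw [pq_succ, ih he]
    set q := m - (e+1) with hq
    have h1 : (m - e) = q + 1 := by omega
    have h3 : ((m:ℚ) - (e:ℚ)) = (q : ℚ) + 1 := by
      rw [hq, Nat.cast_sub h]; push_cast; ring
    have hne2 : ((q:ℚ) + 1) ≠ 0 := by positivity
    rw [h1, Nat.factorial_succ, Nat.cast_mul, Nat.cast_add_one, h3]
    field_simp [fact_ne, hne2]

lemma pq_eq_zero {a : ℚ} {d : ℕ} (j : ℕ) (hj : j < d) (h : a = j) : pq a d = 0 :=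
  Finset.prod_eq_zero (Finset.mem_range.2 hj) (by rw [h]; ring)

lemma pq_neg_one : ∀ n : ℕ, pq (-1) n = (-1:ℚ)^n * n.factorial := by
  intro n
  induction n with
  | zero => simp [pq]
  | succ e ih =>
    rw [pq_succ, ih, Nat.factorial_succ]
    push_cast; ring

lemma term_eq (n s k : ℕ) (hk : k ≤ s) (hk2 : k ≤ 2*n) :
    (-1:ℚ)^k * aa n k / ((s-k).factorial : ℚ)
      = ((n.factorial : ℚ)/(((2*n).factorial : ℚ) * (s.factorial : ℚ)))
        * ((-1:ℚ)^k * (s.choose k : ℚ) * pq (((2*n : ℕ) : ℚ) - (k:ℚ)) n) := by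
  by_cases hkn : k ≤ n
  · have h1 : ((2*n : ℕ) : ℚ) - (k:ℚ) = (((2*n - k) : ℕ) : ℚ) := by
      rw [Nat.cast_sub hk2]
    have h2 : pq (((2*n : ℕ) : ℚ) - (k:ℚ)) n = (((2*n-k).factorial : ℕ) : ℚ) / (((n-k).factorial : ℕ) : ℚ) := by
      rw [h1, pq_cast (2*n-k) n (by omega)]
      have : 2*n - k - n = n - k := by omega
      rw [this]
    rw [h2, aa, if_pos hkn, Nat.cast_choose ℚ hk]
    have hsk : (s.factorial : ℚ) = (k.factorial : ℚ) * ((s-k).factorial : ℚ) * (s.choose k : ℚ) := by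
      rw [← Nat.choose_mul_factorial_mul_factorial hk]; push_cast; ring
    field_simp [fact_ne]
  · have hz : pq (((2*n : ℕ) : ℚ) - (k:ℚ)) n = 0 := by
      apply pq_eq_zero (2*n - k) (by omega)
      rw [Nat.cast_sub hk2]
    rw [hz, aa, if_neg hkn]
    ring

lemma sumDE_eq (n s : ℕ) (hs : s ≤ 2*n) :
    ∑ k ∈ range (s+1), (-1:ℚ)^k * aa n k / ((s-k).factorial : ℚ) = aa n s := by
  have h1 : ∑ k ∈ range (s+1), (-1:ℚ)^k * aa n k / ((s-k).factorial : ℚ)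
      = ((n.factorial : ℚ)/(((2*n).factorial : ℚ) * (s.factorial : ℚ)))
        * ∑ k ∈ range (s+1), (-1:ℚ)^k * (s.choose k : ℚ) * pq (((2*n : ℕ) : ℚ) - (k:ℚ)) n := by
    rw [Finset.mul_sum]
    exact Finset.sum_congr rfl fun k hk =>
      term_eq n s k (Nat.lt_succ_iff.mp (Finset.mem_range.mp hk))
        (le_trans (Nat.lt_succ_iff.mp (Finset.mem_range.mp hk)) hs)
  rw [h1, Slemma n s (((2*n : ℕ)) : ℚ)]
  by_cases hsn : s ≤ n
  · have e1 : (∏ i ∈ range s, ((n:ℚ) - (i:ℚ))) = pq (n:ℚ) s := rfl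
    rw [e1, pq_cast n s hsn]
    have h2 : ((2*n : ℕ) : ℚ) - (s:ℚ) = (((2*n - s) : ℕ) : ℚ) := by
      rw [Nat.cast_sub (by omega : s ≤ 2*n)]
    rw [h2, pq_cast (2*n-s) (n-s) (by omega)]
    have h3 : (2*n - s) - (n - s) = n := by omega
    rw [h3, aa, if_pos hsn]
    field_simp [fact_ne]
  · have e1 : (∏ i ∈ range s, ((n:ℚ) - (i:ℚ))) = 0 :=
      Finset.prod_eq_zero (i := n) (Finset.mem_range.2 (by omega)) (by simp)
    rw [e1, aa, if_neg hsn]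
    ring

lemma sumDE_top (n : ℕ) :
    ∑ k ∈ range (2*n+2), (-1:ℚ)^k * aa n k / ((2*n+1-k).factorial : ℚ)
      = (-1:ℚ)^n * (n.factorial:ℚ)^2 / (((2*n).factorial : ℚ) * ((2*n+1).factorial : ℚ)) := by
  have h1 : ∑ k ∈ range (2*n+2), (-1:ℚ)^k * aa n k / ((2*n+1-k).factorial : ℚ)
      = ∑ k ∈ range (2*n+1), (-1:ℚ)^k * aa n k / ((2*n+1-k).factorial : ℚ) := by
    rw [Finset.sum_range_succ, aa, if_neg (by omega : ¬ (2*n+1 ≤ n))]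
    simp
  have h2 : ∑ k ∈ range (2*n+1), (-1:ℚ)^k * aa n k / ((2*n+1-k).factorial : ℚ)
      = ((n.factorial : ℚ)/(((2*n).factorial : ℚ) * ((2*n+1).factorial : ℚ)))
        * ∑ k ∈ range (2*n+1), (-1:ℚ)^k * ((2*n+1).choose k : ℚ) * pq (((2*n : ℕ) : ℚ) - (k:ℚ)) n := by
    rw [Finset.mul_sum]
    exact Finset.sum_congr rfl fun k hk =>
      term_eq n (2*n+1) k (by have := Finset.mem_range.mp hk; omega)
        (by have := Finset.mem_range.mp hk; omega)
  rw [h1, h2]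
  have hS := Slemma n (2*n+1) (((2*n : ℕ)) : ℚ)
  have hz : (∏ i ∈ range (2*n+1), ((n:ℚ) - (i:ℚ))) = 0 :=
    Finset.prod_eq_zero (i := n) (Finset.mem_range.2 (by omega)) (by simp)
  rw [hz, zero_mul] at hS
  rw [Finset.sum_range_succ] at hS
  have hT : (-1:ℚ)^(2*n+1) * (((2*n+1).choose (2*n+1) : ℕ) : ℚ)
      * pq (((2*n : ℕ) : ℚ) - ((2*n+1 : ℕ):ℚ)) n = -((-1:ℚ)^n * (n.factorial : ℚ)) := by
    have hc : ((2*n+1).choose (2*n+1)) = 1 := Nat.choose_self _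
    have hcast : ((2*n : ℕ) : ℚ) - ((2*n+1 : ℕ):ℚ) = -1 := by push_cast; ring
    have hodd : (-1:ℚ)^(2*n+1) = -1 := Odd.neg_one_pow ⟨n, by ring⟩
    rw [hc, hcast, pq_neg_one, hodd]
    push_cast; ring
  rw [hT] at hS
  have hsum : ∑ k ∈ range (2*n+1), (-1:ℚ)^k * (((2*n+1).choose k : ℕ) : ℚ)
      * pq (((2*n : ℕ) : ℚ) - (k:ℚ)) n = (-1:ℚ)^n * (n.factorial : ℚ) := by linarith
  rw [hsum]
  field_simp [fact_ne]


lemma coeff_DE (n s : ℕ) : (coeff (R := ℚ) s) (DD n * exp ℚ)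
    = ∑ k ∈ range (s+1), (-1:ℚ)^k * aa n k / ((s-k).factorial : ℚ) := by
  rw [coeff_mul, Finset.Nat.sum_antidiagonal_eq_sum_range_succ_mk]
  refine Finset.sum_congr rfl fun k hk => ?_
  rw [DD, coeff_mk, coeff_exp]
  simp [div_eq_mul_inv]

lemma key1 (n s : ℕ) (hs : s ≤ 2*n) : (coeff (R := ℚ) s) (NN n - DD n * exp ℚ) = 0 := by
  rw [map_sub, coeff_DE, sumDE_eq n s hs, NN, coeff_mk, sub_self]

lemma key2 (n : ℕ) (hn : 1 ≤ n) : (coeff (R := ℚ) (2*n+1)) (NN n - DD n * exp ℚ)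
    = (-1:ℚ)^(n+1) * (n.factorial:ℚ)^2 / (((2*n).factorial : ℚ) * ((2*n+1).factorial : ℚ)) := by
  rw [map_sub, coeff_DE, NN, coeff_mk]
  have h0 : aa n (2*n+1) = 0 := by rw [aa, if_neg (by omega)]
  have h2 : (2*n+1) + 1 = 2*n+2 := rfl
  rw [h0, h2, sumDE_top n]
  ring

lemma factA (n : ℕ) :
    bernoulliPowerSeries ℚ * (NN n - DD n) - X * DD n
      = bernoulliPowerSeries ℚ * (NN n - DD n * exp ℚ) := by
  have h := bernoulliPowerSeries_mul_exp_sub_one ℚ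
  linear_combination (DD n) * h

lemma sum_range_even_odd (f : ℕ → ℚ) : ∀ M, ∑ k ∈ range (2*M), f k
    = ∑ i ∈ range M, f (2*i) + ∑ i ∈ range M, f (2*i+1) := by
  intro M
  induction M with
  | zero => simp
  | succ M ih =>
    have h : 2*(M+1) = (2*M + 1) + 1 := by ring
    rw [h, Finset.sum_range_succ, Finset.sum_range_succ,
      Finset.sum_range_succ (fun i => f (2*i)) M, Finset.sum_range_succ (fun i => f (2*i+1)) M, ih]
    ring

lemma ww_vanish (n i : ℕ) (h : (n-1)/2 < i) : ww n i = 0 := by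
  rw [ww, aa, if_neg (by omega)]; ring

lemma coeff_BND (n r : ℕ) (h : (n-1)/2 ≤ r) :
    (coeff (R := ℚ) (2*r+3)) (bernoulliPowerSeries ℚ * (NN n - DD n)) = Sig n r := by
  rw [coeff_mul, Finset.Nat.sum_antidiagonal_eq_sum_range_succ_mk]
  have hterm : ∀ k ∈ range (2*r+3+1),
      (coeff (R := ℚ) k) (bernoulliPowerSeries ℚ) * (coeff (R := ℚ) (2*r+3-k)) (NN n - DD n)
      = (bernoulli k / (k.factorial : ℚ)) * (aa n (2*r+3-k) - (-1:ℚ)^(2*r+3-k) * aa n (2*r+3-k)) := by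
    intro k hk
    rw [map_sub, NN, DD, coeff_mk, coeff_mk, bernoulliPowerSeries, coeff_mk]
    simp
  rw [Finset.sum_congr rfl hterm]
  have h4 : 2*r+3+1 = 2*(r+2) := by ring
  rw [h4, sum_range_even_odd]
  have hodd : ∀ i ∈ range (r+2),
      (bernoulli (2*i+1) / ((2*i+1).factorial : ℚ)) *
        (aa n (2*r+3-(2*i+1)) - (-1:ℚ)^(2*r+3-(2*i+1)) * aa n (2*r+3-(2*i+1))) = 0 := by
    intro i hi
    have he : 2*r+3-(2*i+1) = 2*(r+1-i) := by
      have := Finset.mem_range.mp hi; omega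
    rw [he]
    have : (-1:ℚ)^(2*(r+1-i)) = 1 := by
      rw [pow_mul]; norm_num
    rw [this]; ring
  rw [Finset.sum_eq_zero hodd, add_zero]
  have heven : ∀ i ∈ range (r+2),
      (bernoulli (2*i) / ((2*i).factorial : ℚ)) *
        (aa n (2*r+3-2*i) - (-1:ℚ)^(2*r+3-2*i) * aa n (2*r+3-2*i))
      = cc i * ww n (r+1-i) := by
    intro i hi
    have he : 2*r+3-2*i = 2*(r+1-i)+1 := by
      have := Finset.mem_range.mp hi; omega
    rw [he]
    have hsgn : (-1:ℚ)^(2*(r+1-i)+1) = -1 := Odd.neg_one_pow ⟨r+1-i, by ring⟩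
    rw [hsgn, cc, ww]
    ring
  rw [Finset.sum_congr rfl heven]
  rw [← Finset.sum_range_reflect]
  have hrefl : ∀ i ∈ range (r+2),
      cc (r+2-1-i) * ww n (r+1-(r+2-1-i)) = ww n i * cc (r+1-i) := by
    intro i hi
    have h1 : r+2-1-i = r+1-i := by omega
    have h2 : r+1-(r+1-i) = i := by
      have := Finset.mem_range.mp hi; omega
    rw [h1, h2]; ring
  rw [Finset.sum_congr rfl hrefl]
  rw [Sig]
  have hext : ∑ x ∈ range (r+2), ww n x * cc (r+1-x)
      = ∑ x ∈ range ((n-1)/2 + 1), ww n x * cc (r+1-x) := by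
    symm
    apply Finset.sum_subset
    · intro x hx
      rw [Finset.mem_range] at *
      omega
    · intro x _ hx
      rw [ww_vanish n x (by rw [Finset.mem_range] at hx; omega)]
      ring
  rw [hext]
  refine Finset.sum_congr rfl fun i hi => ?_
  have : r + 1 - i = r - i + 1 := by
    have := Finset.mem_range.mp hi; omega
  rw [this]


lemma coeff_XDD (n q : ℕ) : (PowerSeries.coeff (R := ℚ) (q+1)) (X * DD n) = (-1:ℚ)^q * aa n q := by
  rw [PowerSeries.coeff_succ_X_mul, DD, coeff_mk]

lemma master_zero (n r : ℕ) (h1 : n/2 ≤ r) (h2 : r+2 ≤ n) : Sig n r = 0 := by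
  have hB := coeff_BND n r (by omega)
  have hF := factA n
  have hK : (coeff (R := ℚ) (2*r+3)) (bernoulliPowerSeries ℚ * (NN n - DD n * exp ℚ)) = 0 := by
    rw [coeff_mul, Finset.Nat.sum_antidiagonal_eq_sum_range_succ_mk]
    apply Finset.sum_eq_zero
    intro k hk
    rw [key1 n (2*r+3-k) (by omega), mul_zero]
  have hX : (coeff (R := ℚ) (2*r+3)) (X * DD n) = aa n (2*r+2) := by
    have : 2*r+3 = (2*r+2)+1 := rfl
    rw [this, coeff_XDD]
    have : (-1:ℚ)^(2*r+2) = 1 := by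
      have : 2*r+2 = 2*(r+1) := by ring
      rw [this, pow_mul]; norm_num
    rw [this, one_mul]
  have haa : aa n (2*r+2) = 0 := by rw [aa, if_neg (by omega)]
  have := congrArg (coeff (R := ℚ) (2*r+3)) hF
  rw [map_sub, hB, hK, hX, haa] at this
  linarith

lemma master_diag (n : ℕ) (hn : 1 ≤ n) :
    Sig n (n-1) = (-1:ℚ)^(n+1) * (n.factorial:ℚ)^2
      / (((2*n).factorial : ℚ) * ((2*n+1).factorial : ℚ)) := by
  have hB := coeff_BND n (n-1) (by omega)
  have hF := factA n
  have he : 2*(n-1)+3 = 2*n+1 := by omega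
  rw [he] at hB
  have hK : (coeff (R := ℚ) (2*n+1)) (bernoulliPowerSeries ℚ * (NN n - DD n * exp ℚ))
      = (-1:ℚ)^(n+1) * (n.factorial:ℚ)^2
        / (((2*n).factorial : ℚ) * ((2*n+1).factorial : ℚ)) := by
    rw [coeff_mul, Finset.Nat.sum_antidiagonal_eq_sum_range_succ_mk]
    rw [Finset.sum_eq_single_of_mem 0 (Finset.mem_range.2 (by omega))]
    · show (coeff (R := ℚ) 0) (bernoulliPowerSeries ℚ) * (coeff (R := ℚ) (2*n+1-0)) (NN n - DD n * exp ℚ) = _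
      rw [Nat.sub_zero, key2 n hn]
      simp [bernoulliPowerSeries, coeff_mk, bernoulli_zero]
    · intro k hk hk0
      rw [key1 n (2*n+1-k) (by omega), mul_zero]
  have hX : (coeff (R := ℚ) (2*n+1)) (X * DD n) = 0 := by
    have h3 : 2*n+1 = (2*n)+1 := rfl
    rw [h3, coeff_XDD, aa, if_neg (by omega)]
    ring
  have := congrArg (coeff (R := ℚ) (2*n+1)) hF
  rw [map_sub, hB, hK, hX] at this
  linarith


lemma dfact_ne (m : ℕ) : ((m.doubleFactorial : ℚ)) ≠ 0 := by
  exact_mod_cast (Nat.doubleFactorial_pos m).ne'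

/-- (4j+2)! = 2^(2j+1) (2j+1)! (4j+1)‼ -/
lemma fact_42 (j : ℕ) : (4*j+2).factorial = 2^(2*j+1) * (2*j+1).factorial * (4*j+1).doubleFactorial := by
  have h1 : (4*j+2) = (4*j+1)+1 := rfl
  have h2 := Nat.factorial_eq_mul_doubleFactorial (4*j+1)
  have h3 : (4*j+1+1) = 2*(2*j+1) := by ring
  rw [h1, h2, h3, Nat.doubleFactorial_two_mul]

/-- (4j+3)! = (4j+3)‼ 2^(2j+1) (2j+1)! -/
lemma fact_43 (j : ℕ) : (4*j+3).factorial = (4*j+3).doubleFactorial * (2^(2*j+1) * (2*j+1).factorial) := by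
  have h2 := Nat.factorial_eq_mul_doubleFactorial (4*j+2)
  have h3 : (4*j+2+1) = 4*j+3 := rfl
  rw [h3] at h2
  have h4 : (4*j+2) = 2*(2*j+1) := by ring
  rw [h2, h4, Nat.doubleFactorial_two_mul]

lemma fact_44 (j : ℕ) : (4*j+4).factorial = 2^(2*j+2) * (2*j+2).factorial * (4*j+3).doubleFactorial := by
  have h2 := Nat.factorial_eq_mul_doubleFactorial (4*j+3)
  have h3 : (4*j+3+1) = 2*(2*j+2) := by ring
  rw [show (4*j+4) = (4*j+3)+1 from rfl, h2, h3, Nat.doubleFactorial_two_mul]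

lemma fact_45 (j : ℕ) : (4*j+5).factorial = (4*j+5).doubleFactorial * (2^(2*j+2) * (2*j+2).factorial) := by
  have h2 := Nat.factorial_eq_mul_doubleFactorial (4*j+4)
  have h3 : (4*j+4+1) = 4*j+5 := rfl
  rw [h3] at h2
  have h4 : (4*j+4) = 2*(2*j+2) := by ring
  rw [h2, h4, Nat.doubleFactorial_two_mul]

lemma hh_eq (j : ℕ) : hh j = 1 / (2^(4*j+2) * ((4*j+1).doubleFactorial : ℚ) * ((4*j+3).doubleFactorial : ℚ)) := by
  rw [hh, fact_42, fact_43]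
  push_cast
  rw [div_eq_div_iff (by positivity) (by positivity)]
  ring

lemma hh'_eq (j : ℕ) : hh' j = -(1 / (2^(4*j+4) * ((4*j+3).doubleFactorial : ℚ) * ((4*j+5).doubleFactorial : ℚ))) := by
  rw [hh', fact_44, fact_45]
  push_cast
  rw [neg_inj, div_eq_div_iff (by positivity) (by positivity)]
  ring

lemma prod1 (n : ℕ) (hn : 1 ≤ n) : ∏ j ∈ range n, hh j
    = 1 / ((2:ℚ) ^ (2 * n ^ 2) * ∏ m ∈ Finset.Icc 1 (2*n - 1), ((2*m+1).doubleFactorial : ℚ)) := by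
  induction n, hn using Nat.le_induction with
  | base =>
    rw [Finset.prod_range_one, hh_eq]
    norm_num [Nat.doubleFactorial]
  | succ n hn ih =>
    rw [Finset.prod_range_succ, ih, hh_eq]
    have h1 : 2*(n+1) - 1 = (2*n)+1 := by omega
    have h2 : 2*n = (2*n-1)+1 := by omega
    rw [h1, Finset.prod_Icc_succ_top (by omega : 1 ≤ 2*n+1)]
    rw [h2, Finset.prod_Icc_succ_top (by omega : 1 ≤ (2*n-1)+1)]
    rw [← h2]
    have e1 : 2*(n+1)^2 = (2*n^2) + (4*n+2) := by ring
    rw [e1, pow_add]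
    have e2 : 2*(2*n)+1 = 4*n+1 := by ring
    have e3 : 2*(2*n+1)+1 = 4*n+3 := by ring
    rw [e2, e3]
    have hP : (∏ m ∈ Finset.Icc 1 (2*n-1), ((2*m+1).doubleFactorial : ℚ)) ≠ 0 :=
      Finset.prod_ne_zero_iff.2 fun m _ => dfact_ne _
    field_simp
    ring

lemma prod2 (n : ℕ) : ∏ j ∈ range n, hh' j
    = (-1:ℚ)^n / ((2:ℚ) ^ (2 * n * (n + 1)) * ∏ m ∈ Finset.Icc 1 (2*n), ((2*m+1).doubleFactorial : ℚ)) := by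
  induction n with
  | zero => simp
  | succ n ih =>
    rw [Finset.prod_range_succ, ih, hh'_eq]
    have h1 : 2*(n+1) = (2*n+1)+1 := by ring
    rw [h1, Finset.prod_Icc_succ_top (by omega : 1 ≤ 2*n+1+1),
      Finset.prod_Icc_succ_top (by omega : 1 ≤ 2*n+1)]
    have e1 : (2*n+1+1)*(n+1+1) = (2*n*(n+1)) + (4*n+4) := by ring
    rw [e1, pow_add]
    have e2 : 2*(2*n+1)+1 = 4*n+3 := by ring
    have e3 : 2*((2*n+1)+1)+1 = 4*n+5 := by ring
    rw [e2, e3]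
    have hP : (∏ m ∈ Finset.Icc 1 (2*n), ((2*m+1).doubleFactorial : ℚ)) ≠ 0 :=
      Finset.prod_ne_zero_iff.2 fun m _ => dfact_ne _
    field_simp
    ring


lemma aa_one (n : ℕ) (hn : 1 ≤ n) : aa n 1 = 1/2 := by
  rw [aa, if_pos (by omega : 1 ≤ n)]
  have h1 := Nat.factorial_succ (2*n-1)
  rw [show 2*n-1+1 = 2*n from by omega] at h1
  have h2 := Nat.factorial_succ (n-1)
  rw [show n-1+1 = n from by omega] at h2
  rw [h1, h2, Nat.factorial_one]
  have c1 : ((2*n-1).factorial : ℚ) ≠ 0 := fact_ne _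
  have c2 : ((n-1).factorial : ℚ) ≠ 0 := fact_ne _
  have c3 : ((2*n : ℕ) : ℚ) ≠ 0 := by positivity
  push_cast
  rw [div_eq_div_iff (by positivity) (by norm_num)]
  ring

lemma ww_zero (n : ℕ) (hn : 1 ≤ n) : ww n 0 = 1 := by
  rw [ww, show 2*0+1 = 1 from rfl, aa_one n hn]
  norm_num

/-- Part-1 Hankel matrix and triangular factor -/
def H1 (n : ℕ) : Matrix (Fin n) (Fin n) ℚ := fun a b => cc ((a:ℕ) + (b:ℕ) + 1)
def U1 (n : ℕ) : Matrix (Fin n) (Fin n) ℚ := fun b j =>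
  if (b:ℕ) ≤ (j:ℕ) then ww (2*(j:ℕ)+1) ((j:ℕ) - (b:ℕ)) else 0
def H2 (n : ℕ) : Matrix (Fin n) (Fin n) ℚ := fun a b => cc ((a:ℕ) + (b:ℕ) + 2)
def U2 (n : ℕ) : Matrix (Fin n) (Fin n) ℚ := fun b j =>
  if (b:ℕ) ≤ (j:ℕ) then ww (2*(j:ℕ)+2) ((j:ℕ) - (b:ℕ)) else 0

lemma U1_det (n : ℕ) : (U1 n).det = 1 := by
  rw [Matrix.det_of_upperTriangular (by
    intro i j hij
    rw [U1, if_neg (by exact fun h => absurd (Fin.le_def.2 h) (not_le.2 hij))])]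
  apply Finset.prod_eq_one
  intro j _
  rw [U1, if_pos le_rfl, Nat.sub_self, ww_zero _ (by omega)]

lemma U2_det (n : ℕ) : (U2 n).det = 1 := by
  rw [Matrix.det_of_upperTriangular (by
    intro i j hij
    rw [U2, if_neg (by exact fun h => absurd (Fin.le_def.2 h) (not_le.2 hij))])]
  apply Finset.prod_eq_one
  intro j _
  rw [U2, if_pos le_rfl, Nat.sub_self, ww_zero _ (by omega)]

lemma HU1_entry (n : ℕ) (a j : Fin n) :
    (H1 n * U1 n) a j = Sig (2*(j:ℕ)+1) ((a:ℕ)+(j:ℕ)) := by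
  rw [Matrix.mul_apply]
  have step1 : ∀ b : Fin n, H1 n a b * U1 n b j
      = (fun b : ℕ => if b ≤ (j:ℕ) then cc ((a:ℕ)+b+1) * ww (2*(j:ℕ)+1) ((j:ℕ)-b) else 0) (b:ℕ) := by
    intro b
    simp only [H1, U1, mul_ite, mul_zero]
  rw [Finset.sum_congr rfl (fun b _ => step1 b)]
  rw [Fin.sum_univ_eq_sum_range (fun b : ℕ => if b ≤ (j:ℕ) then cc ((a:ℕ)+b+1) * ww (2*(j:ℕ)+1) ((j:ℕ)-b) else 0) n]
  have step2 : ∑ b ∈ range n, (if b ≤ (j:ℕ) then cc ((a:ℕ)+b+1) * ww (2*(j:ℕ)+1) ((j:ℕ)-b) else 0)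
      = ∑ b ∈ range ((j:ℕ)+1), cc ((a:ℕ)+b+1) * ww (2*(j:ℕ)+1) ((j:ℕ)-b) := by
    rw [← Finset.sum_subset (Finset.range_subset_range.2 (by omega : (j:ℕ)+1 ≤ n))
      (fun x _ hx => if_neg (by rw [Finset.mem_range] at hx; omega))]
    exact Finset.sum_congr rfl fun b hb => if_pos (by rw [Finset.mem_range] at hb; omega)
  rw [step2, ← Finset.sum_range_reflect]
  rw [Sig, show (2*(j:ℕ)+1-1)/2 = (j:ℕ) from by omega]
  refine Finset.sum_congr rfl fun i hi => ?_
  rw [Finset.mem_range] at hi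
  rw [show (j:ℕ)+1-1-i = (j:ℕ)-i from by omega,
    show (j:ℕ)-((j:ℕ)-i) = i from by omega,
    show (a:ℕ)+((j:ℕ)-i)+1 = (a:ℕ)+(j:ℕ)-i+1 from by omega]
  ring

lemma HU2_entry (n : ℕ) (a j : Fin n) :
    (H2 n * U2 n) a j = Sig (2*(j:ℕ)+2) ((a:ℕ)+(j:ℕ)+1) := by
  rw [Matrix.mul_apply]
  have step1 : ∀ b : Fin n, H2 n a b * U2 n b j
      = (fun b : ℕ => if b ≤ (j:ℕ) then cc ((a:ℕ)+b+2) * ww (2*(j:ℕ)+2) ((j:ℕ)-b) else 0) (b:ℕ) := by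
    intro b
    simp only [H2, U2, mul_ite, mul_zero]
  rw [Finset.sum_congr rfl (fun b _ => step1 b)]
  rw [Fin.sum_univ_eq_sum_range (fun b : ℕ => if b ≤ (j:ℕ) then cc ((a:ℕ)+b+2) * ww (2*(j:ℕ)+2) ((j:ℕ)-b) else 0) n]
  have step2 : ∑ b ∈ range n, (if b ≤ (j:ℕ) then cc ((a:ℕ)+b+2) * ww (2*(j:ℕ)+2) ((j:ℕ)-b) else 0)
      = ∑ b ∈ range ((j:ℕ)+1), cc ((a:ℕ)+b+2) * ww (2*(j:ℕ)+2) ((j:ℕ)-b) := by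
    rw [← Finset.sum_subset (Finset.range_subset_range.2 (by omega : (j:ℕ)+1 ≤ n))
      (fun x _ hx => if_neg (by rw [Finset.mem_range] at hx; omega))]
    exact Finset.sum_congr rfl fun b hb => if_pos (by rw [Finset.mem_range] at hb; omega)
  rw [step2, ← Finset.sum_range_reflect]
  rw [Sig, show (2*(j:ℕ)+2-1)/2 = (j:ℕ) from by omega]
  refine Finset.sum_congr rfl fun i hi => ?_
  rw [Finset.mem_range] at hi
  rw [show (j:ℕ)+1-1-i = (j:ℕ)-i from by omega,
    show (j:ℕ)-((j:ℕ)-i) = i from by omega,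
    show (a:ℕ)+((j:ℕ)-i)+2 = (a:ℕ)+(j:ℕ)+1-i+1 from by omega]
  ring

lemma H1_det (n : ℕ) : (H1 n).det = ∏ j ∈ range n, hh j := by
  have hdet : (H1 n).det = ((H1 n) * (U1 n)).det := by
    rw [Matrix.det_mul, U1_det, mul_one]
  rw [hdet]
  rw [Matrix.det_of_lowerTriangular _ (by
    intro i j hij
    have hij' : (i:ℕ) < (j:ℕ) := hij
    rw [HU1_entry]
    exact master_zero _ _ (by omega) (by omega))]
  rw [← Fin.prod_univ_eq_prod_range hh n]
  refine Finset.prod_congr rfl fun j _ => ?_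
  rw [HU1_entry]
  have h1 : 2*(j:ℕ)+1-1 = (j:ℕ)+(j:ℕ) := by omega
  have := master_diag (2*(j:ℕ)+1) (by omega)
  rw [h1] at this
  rw [show (j:ℕ)+(j:ℕ) = (j:ℕ)+(j:ℕ) from rfl] at this ⊢
  rw [show (j:ℕ)+(j:ℕ) = 2*(j:ℕ) from by ring] at this
  rw [show (j:ℕ)+(j:ℕ) = 2*(j:ℕ) from by ring]
  rw [this, hh]
  have hsgn : (-1:ℚ)^(2*(j:ℕ)+1+1) = 1 := by
    rw [show 2*(j:ℕ)+1+1 = 2*((j:ℕ)+1) from by ring, pow_mul]; norm_num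
  rw [hsgn]
  rw [show 2*(2*(j:ℕ)+1)+1 = 4*(j:ℕ)+3 from by ring,
    show 2*(2*(j:ℕ)+1) = 4*(j:ℕ)+2 from by ring]
  ring

lemma H2_det (n : ℕ) : (H2 n).det = ∏ j ∈ range n, hh' j := by
  have hdet : (H2 n).det = ((H2 n) * (U2 n)).det := by
    rw [Matrix.det_mul, U2_det, mul_one]
  rw [hdet]
  rw [Matrix.det_of_lowerTriangular _ (by
    intro i j hij
    have hij' : (i:ℕ) < (j:ℕ) := hij
    rw [HU2_entry]
    exact master_zero _ _ (by omega) (by omega))]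
  rw [← Fin.prod_univ_eq_prod_range hh' n]
  refine Finset.prod_congr rfl fun j _ => ?_
  rw [HU2_entry]
  have h1 : 2*(j:ℕ)+2-1 = (j:ℕ)+(j:ℕ)+1 := by omega
  have := master_diag (2*(j:ℕ)+2) (by omega)
  rw [h1] at this
  rw [this, hh']
  have hsgn : (-1:ℚ)^(2*(j:ℕ)+2+1) = -1 := Odd.neg_one_pow ⟨(j:ℕ)+1, by ring⟩
  rw [hsgn]
  rw [show 2*(2*(j:ℕ)+2)+1 = 4*(j:ℕ)+5 from by ring,
    show 2*(2*(j:ℕ)+2) = 4*(j:ℕ)+4 from by ring]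
  ring


end
end Stmt6

open Finset

theorem stmt_6 (n : ℕ) (hn : 1 ≤ n) :
    ((Matrix.of fun a b : Fin n =>
        bernoulli (2 * ((a : ℕ) + 1) + 2 * ((b : ℕ) + 1) - 2) /
          (Nat.factorial (2 * ((a : ℕ) + 1) + 2 * ((b : ℕ) + 1) - 2) : ℚ)).det
      = 1 / ((2 : ℚ) ^ (2 * n ^ 2) *
          ∏ m ∈ Finset.Icc 1 (2 * n - 1), (Nat.doubleFactorial (2 * m + 1) : ℚ)))
    ∧ (Matrix.of fun a b : Fin n =>
        bernoulli (2 * ((a : ℕ) + 1) + 2 * ((b : ℕ) + 1)) /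
          (Nat.factorial (2 * ((a : ℕ) + 1) + 2 * ((b : ℕ) + 1)) : ℚ)).det
      = (-1 : ℚ) ^ n / ((2 : ℚ) ^ (2 * n * (n + 1)) *
          ∏ m ∈ Finset.Icc 1 (2 * n), (Nat.doubleFactorial (2 * m + 1) : ℚ)) := by
  constructor
  · have e1 : (Matrix.of fun a b : Fin n =>
        bernoulli (2 * ((a : ℕ) + 1) + 2 * ((b : ℕ) + 1) - 2) /
          (Nat.factorial (2 * ((a : ℕ) + 1) + 2 * ((b : ℕ) + 1) - 2) : ℚ)) = Stmt6.H1 n := by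
      ext a b
      simp only [Matrix.of_apply, Stmt6.H1, Stmt6.cc]
      rw [show 2 * ((a:ℕ) + 1) + 2 * ((b:ℕ) + 1) - 2 = 2 * ((a:ℕ) + (b:ℕ) + 1) from by omega]
    rw [e1, Stmt6.H1_det, Stmt6.prod1 n hn]
  · have e2 : (Matrix.of fun a b : Fin n =>
        bernoulli (2 * ((a : ℕ) + 1) + 2 * ((b : ℕ) + 1)) /
          (Nat.factorial (2 * ((a : ℕ) + 1) + 2 * ((b : ℕ) + 1)) : ℚ)) = Stmt6.H2 n := by
      ext a b
      simp only [Matrix.of_apply, Stmt6.H2, Stmt6.cc]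
      rw [show 2 * ((a:ℕ) + 1) + 2 * ((b:ℕ) + 1) = 2 * ((a:ℕ) + (b:ℕ) + 2) from by omega]
    rw [e2, Stmt6.H2_det, Stmt6.prod2 n]
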